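/- Lemma 1 (generalized policy-difference lemma). Let (S, A, P, R, H) be an episodic MDP with initial state s₁. Let π and π̃ be any two policies and let Q̄_h : S×A → ℝ, h ∈ {1,…,H}, be arbitrary functions with Q̄_{H+1} ≡ 0, and define V̄_1(s₁) := Σ_{a∈A} π̃_1(a|s₁) Q̄_1(s₁,a). Then V_1^π(s₁) − V̄_1(s₁) = Σ_{h=1}^H E_{s_h∼π}[ Σ_{a∈A} (π_h(a|s_h) − π̃_h(a|s_h)) Q̄_h(s_h,a) ] − Σ_{h=1}^H E_{(s_h,a_h)∼π}[ Q̄_h(s_h,a_h) − (T_h^{π̃} Q̄_{h+1})(s_h,a_h) ]. -/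
import Mathlib


open Finset

noncomputable def Vaux {S A : Type} [Fintype S] [Fintype A]
    (P : ℕ → S → A → S → ℝ) (R : ℕ → S → A → ℝ) (π : ℕ → S → A → ℝ) :
    ℕ → ℕ → S → ℝ
  | 0, _, _ => 0
  | (t+1), h, s =>
      ∑ a, π h s a * (R h s a + ∑ s', P h s a s' * Vaux P R π t (h+1) s')

/-- `Val P R H π h s` : value function `V_h^π(s)` (steps are 0-based, `h ∈ {0,…,H}`). -/
noncomputable def Val {S A : Type} [Fintype S] [Fintype A]
    (P : ℕ → S → A → S → ℝ) (R : ℕ → S → A → ℝ) (H : ℕ) (π : ℕ → S → A → ℝ)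
    (h : ℕ) (s : S) : ℝ :=
  Vaux P R π (H - h) h s

/-- law of `s_h` under policy `π` started from `s₁` (0-based: `visit _ _ _ 0 = δ_{s₁}`). -/
noncomputable def visit {S A : Type} [Fintype S] [Fintype A] [DecidableEq S]
    (P : ℕ → S → A → S → ℝ) (π : ℕ → S → A → ℝ) (s₁ : S) : ℕ → S → ℝ
  | 0, s => if s = s₁ then 1 else 0
  | (h+1), s' => ∑ s, ∑ a, visit P π s₁ h s * π h s a * P h s a s'

/-- `E_π[f(s_h,a_h)]`. -/
noncomputable def Epi {S A : Type} [Fintype S] [Fintype A] [DecidableEq S]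
    (P : ℕ → S → A → S → ℝ) (π : ℕ → S → A → ℝ) (s₁ : S) (h : ℕ)
    (f : S → A → ℝ) : ℝ :=
  ∑ s, ∑ a, visit P π s₁ h s * π h s a * f s a

/-- Bellman operator `T_h^π` applied to `Q_{h+1}`. -/
noncomputable def Bellman {S A : Type} [Fintype S] [Fintype A]
    (P : ℕ → S → A → S → ℝ) (R : ℕ → S → A → ℝ) (π : ℕ → S → A → ℝ)
    (h : ℕ) (Q : S → A → ℝ) (s : S) (a : A) : ℝ :=
  R h s a + ∑ s', P h s a s' * ∑ a', π (h+1) s' a' * Q s' a'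

def IsPolicy {S A : Type} [Fintype A] (H : ℕ) (π : ℕ → S → A → ℝ) : Prop :=
  ∀ h < H, ∀ s, (∀ a, 0 ≤ π h s a) ∧ ∑ a, π h s a = 1

def IsKernel {S A : Type} [Fintype S] (H : ℕ) (P : ℕ → S → A → S → ℝ) : Prop :=
  ∀ h < H, ∀ s a, (∀ s', 0 ≤ P h s a s') ∧ ∑ s', P h s a s' = 1

def IsReward {S A : Type} (H : ℕ) (R : ℕ → S → A → ℝ) : Prop :=
  ∀ h < H, ∀ s a, 0 ≤ R h s a ∧ R h s a ≤ 1


lemma swap3 {S A : Type} [Fintype S] [Fintype A] (g : S → A → S → ℝ) (X : S → ℝ) :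
    ∑ s', (∑ s, ∑ a, g s a s') * X s' = ∑ s, ∑ a, ∑ s', g s a s' * X s' := by
  simp_rw [Finset.sum_mul]
  rw [Finset.sum_comm]
  refine Finset.sum_congr rfl fun s _ => ?_
  rw [Finset.sum_comm]

/-- **Lemma 1 (generalized policy-difference lemma).** Steps are 0-based
(`h ∈ {0,…,H-1}`), and `Q̄_H ≡ 0`. -/
theorem generalized_policy_difference
    (S A : Type) [Fintype S] [Fintype A] [DecidableEq S] [Nonempty S] [Nonempty A]
    (P : ℕ → S → A → S → ℝ) (R : ℕ → S → A → ℝ) (H : ℕ) (s₁ : S)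
    (π πt : ℕ → S → A → ℝ) (Qbar : ℕ → S → A → ℝ)
    (hP : IsKernel H P) (hR : IsReward H R)
    (hπ : IsPolicy H π) (hπt : IsPolicy H πt)
    (hQH : ∀ s a, Qbar H s a = 0) :
    Val P R H π 0 s₁ - (∑ a, πt 0 s₁ a * Qbar 0 s₁ a)
      = (∑ h ∈ Finset.range H, ∑ s, visit P π s₁ h s *
            ∑ a, (π h s a - πt h s a) * Qbar h s a)
        - ∑ h ∈ Finset.range H,
            Epi P π s₁ h (fun s a => Qbar h s a - Bellman P R πt h (Qbar (h+1)) s a) := by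
  set D : ℕ → ℝ := fun h => ∑ s, visit P π s₁ h s *
      (Val P R H π h s - ∑ a, πt h s a * Qbar h s a) with hD
  have hVal : ∀ h, h < H → ∀ s, Val P R H π h s
      = ∑ a, π h s a * (R h s a + ∑ s', P h s a s' * Val P R H π (h+1) s') := by
    intro h hh s
    have e : H - h = (H - (h+1)) + 1 := by omega
    simp only [Val, e, Vaux]
  have hValH : ∀ s : S, Val P R H π H s = 0 := by
    intro s; simp [Val, Vaux]
  have hD0 : D 0 = Val P R H π 0 s₁ - ∑ a, πt 0 s₁ a * Qbar 0 s₁ a := by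
    simp [hD, visit]
  have hDH : D H = 0 := by
    simp [hD, hValH, hQH]
  have key : ∀ h ∈ Finset.range H,
      (∑ s, visit P π s₁ h s * ∑ a, (π h s a - πt h s a) * Qbar h s a)
      - Epi P π s₁ h (fun s a => Qbar h s a - Bellman P R πt h (Qbar (h+1)) s a)
      = D h - D (h+1) := by
    intro h hmem
    rw [Finset.mem_range] at hmem
    have hvisit : ∀ s' : S, visit P π s₁ (h+1) s'
        = ∑ s, ∑ a, visit P π s₁ h s * π h s a * P h s a s' := by
      intro s'; rfl
    have hDh1 : D (h+1) = ∑ s, ∑ a, ∑ s', (visit P π s₁ h s * π h s a * P h s a s')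
        * (Val P R H π (h+1) s' - ∑ a', πt (h+1) s' a' * Qbar (h+1) s' a') := by
      simp only [hD]
      simp_rw [hvisit]
      exact swap3 _ _
    rw [hDh1]
    simp only [hD, Epi, Bellman]
    rw [← Finset.sum_sub_distrib, ← Finset.sum_sub_distrib]
    refine Finset.sum_congr rfl fun s _ => ?_
    rw [hVal h hmem s]
    simp only [Finset.mul_sum, ← Finset.sum_sub_distrib, Finset.sum_mul]
    refine Finset.sum_congr rfl fun a _ => ?_
    simp only [mul_sub, mul_add, sub_mul, add_mul, Finset.mul_sum, Finset.sum_mul, Finset.sum_sub_distrib]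
    ring_nf
  calc Val P R H π 0 s₁ - (∑ a, πt 0 s₁ a * Qbar 0 s₁ a) = D 0 - D H := by
        rw [hD0, hDH]; ring
    _ = ∑ h ∈ Finset.range H, (D h - D (h+1)) := (Finset.sum_range_sub' D H).symm
    _ = _ := by
        rw [← Finset.sum_sub_distrib]
        exact (Finset.sum_congr rfl key).symm
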